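/- Let {X_n; f_n^{n+1}} be an inverse sequence of countable spaces with analytic topologies. Then the topology of any countable subspace of X_∞ is analytic. Moreover, if each X_n has an F_σ base, then every countable subspace of X_∞ has an F_σ base. -/

import Mathlib

open MeasureTheory Set TopologicalSpace

/-- A topology on `X` is analytic if, viewed as a subset of the Cantor cube
`2^X = X → Bool` (via characteristic functions), it is an analytic set. -/
def IsAnalyticTopology (X : Type*) [TopologicalSpace X] : Prop :=
  MeasureTheory.AnalyticSet {χ : X → Bool | IsOpen {x | χ x = true}}


/-- A space has an F_σ base if it has a base of open sets which, viewed as a subset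
of the Cantor cube `X → Bool`, is a countable union of closed sets. -/
def HasFsigmaBase (X : Type*) [TopologicalSpace X] : Prop :=
  ∃ B : Set (X → Bool),
    TopologicalSpace.IsTopologicalBasis ((fun χ => {x | χ x = true}) '' B) ∧
    ∃ C : ℕ → Set (X → Bool), (∀ n, IsClosed (C n)) ∧ B = ⋃ n, C n

section aux

lemma AnalyticSet.inter' {α : Type*} [TopologicalSpace α] [T2Space α] {s t : Set α}
    (hs : AnalyticSet s) (ht : AnalyticSet t) : AnalyticSet (s ∩ t) := by
  have h : s ∩ t = ⋂ b : Bool, (if b then s else t) := by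
    ext x; simp [Bool.forall_bool, and_comm]
  rw [h]
  exact AnalyticSet.iInter (fun b => by cases b <;> simpa)

lemma AnalyticSet.union' {α : Type*} [TopologicalSpace α] {s t : Set α}
    (hs : AnalyticSet s) (ht : AnalyticSet t) : AnalyticSet (s ∪ t) := by
  have h : s ∪ t = ⋃ b : Bool, (if b then s else t) := by
    ext x; simp [Bool.exists_bool, or_comm]
  rw [h]
  exact AnalyticSet.iUnion (fun b => by cases b <;> simpa)

variable {X : ℕ → Type*} [∀ n, TopologicalSpace (X n)] (f : ∀ n, X (n + 1) → X n)

/-- Composite bonding map `X (i+k) → X i`. -/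
def chainMap : ∀ (i k : ℕ), X (i + k) → X i
  | _, 0 => id
  | i, k+1 => chainMap i k ∘ f (i + k)

lemma chainMap_continuous (hf : ∀ n, Continuous (f n)) (i k : ℕ) :
    Continuous (chainMap f i k) := by
  induction k with
  | zero => exact continuous_id
  | succ k ih => exact ih.comp (hf (i + k))

omit [∀ n, TopologicalSpace (X n)] in
lemma chainMap_spec {x : ∀ n, X n} (hx : ∀ n, x n = f n (x (n + 1))) (i k : ℕ) :
    x i = chainMap f i k (x (i + k)) := by
  induction k with
  | zero => rfl
  | succ k ih =>
    show x i = chainMap f i k (f (i + k) (x (i + k + 1)))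
    rw [← hx (i + k)]; exact ih

/-- The base of the subspace topology on a subset of the inverse limit obtained
from bases of the coordinate spaces. -/
lemma basis_of_invLimit (hf : ∀ n, Continuous (f n))
    (Y : Set {x : ∀ n, X n // ∀ n, x n = f n (x (n + 1))})
    (𝔅 : ∀ n, Set (Set (X n))) (h𝔅 : ∀ n, IsTopologicalBasis (𝔅 n)) :
    IsTopologicalBasis
      {S : Set ↥Y | ∃ n, ∃ V ∈ 𝔅 n, S = (fun y : ↥Y => y.1.1 n) ⁻¹' V} := by
  have econt : ∀ n, Continuous (fun y : ↥Y => y.1.1 n) :=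
    fun n => (continuous_apply n).comp (continuous_subtype_val.comp continuous_subtype_val)
  apply isTopologicalBasis_of_isOpen_of_nhds
  · rintro S ⟨n, V, hV, rfl⟩
    exact ((h𝔅 n).isOpen hV).preimage (econt n)
  · intro y U hyU hU
    -- U is the preimage of an open set of the product
    obtain ⟨t, ht, rfl⟩ := isOpen_induced_iff.mp hU
    obtain ⟨W, hW, rfl⟩ := isOpen_induced_iff.mp ht
    have hyW : y.1.1 ∈ W := hyU
    obtain ⟨I, u, hu, hpi⟩ := isOpen_pi_iff.mp hW _ hyW
    -- reduce the finite intersection to a single coordinate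
    have key : ∀ (J : Finset ℕ), (∀ i ∈ J, IsOpen (u i) ∧ y.1.1 i ∈ u i) →
        ∃ n, ∃ V : Set (X n), IsOpen V ∧ y.1.1 n ∈ V ∧
          ∀ z : ↥Y, z.1.1 n ∈ V → ∀ i ∈ J, z.1.1 i ∈ u i := by
      intro J
      induction J using Finset.induction_on with
      | empty => intro _; exact ⟨0, Set.univ, isOpen_univ, trivial, by simp⟩
      | @insert a J ha ih =>
        intro hins
        obtain ⟨n, V, hV, hyV, hsub⟩ := ih (fun i hi => hins i (Finset.mem_insert_of_mem hi))
        obtain ⟨hua, hya⟩ := hins a (Finset.mem_insert_self a J)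
        rcases le_total a n with h | h
        · obtain ⟨k, rfl⟩ := Nat.le.dest h
          refine ⟨a + k, V ∩ chainMap f a k ⁻¹' (u a), hV.inter (hua.preimage
            (chainMap_continuous f hf a k)), ⟨hyV, ?_⟩, ?_⟩
          · show chainMap f a k (y.1.1 (a + k)) ∈ u a
            rw [← chainMap_spec f y.1.2 a k]; exact hya
          · rintro z ⟨hz1, hz2⟩ i hi
            rcases Finset.mem_insert.mp hi with rfl | hi
            · have := chainMap_spec f z.1.2 i k
              rw [this]; exact hz2
            · exact hsub z hz1 i hi
        · obtain ⟨k, rfl⟩ := Nat.le.dest h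
          refine ⟨n + k, chainMap f n k ⁻¹' V ∩ u (n + k), (hV.preimage
            (chainMap_continuous f hf n k)).inter hua, ⟨?_, hya⟩, ?_⟩
          · show chainMap f n k (y.1.1 (n + k)) ∈ V
            rw [← chainMap_spec f y.1.2 n k]; exact hyV
          · rintro z ⟨hz1, hz2⟩ i hi
            rcases Finset.mem_insert.mp hi with rfl | hi
            · exact hz2
            · refine hsub z ?_ i hi
              have := chainMap_spec f z.1.2 n k
              rw [this]; exact hz1
    obtain ⟨n, V, hV, hyV, hsub⟩ := key I hu
    -- refine by a basis element of X n
    obtain ⟨b, hb, hyb, hbV⟩ := (h𝔅 n).isOpen_iff.mp hV _ hyV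
    refine ⟨(fun y : ↥Y => y.1.1 n) ⁻¹' b, ⟨n, b, hb, rfl⟩, hyb, ?_⟩
    intro z hz
    show z.1.1 ∈ W
    apply hpi
    intro i hi
    exact hsub z (hbV hz) i hi

end aux

/-- A countable space whose topology has an analytic base has analytic topology. -/
lemma isAnalyticTopology_of_analytic_basis {Z : Type*} [TopologicalSpace Z] [Countable Z]
    {B : Set (Z → Bool)} (hB : AnalyticSet B)
    (hbasis : IsTopologicalBasis ((fun χ : Z → Bool => {x | χ x = true}) '' B)) :
    IsAnalyticTopology Z := by
  rcases isEmpty_or_nonempty Z with hZ | hZ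
  · have h : {χ : Z → Bool | IsOpen {x | χ x = true}} = Set.univ := by
      ext χ
      simp only [mem_setOf_eq, mem_univ, iff_true]
      have : {x | χ x = true} = (∅ : Set Z) := Set.eq_empty_of_isEmpty _
      rw [this]; exact isOpen_empty
    show AnalyticSet {χ : Z → Bool | IsOpen {x | χ x = true}}
    rw [h]
    exact isClosed_univ.analyticSet
  · have heq : {χ : Z → Bool | IsOpen {x | χ x = true}} =
        ⋂ y : Z, ({χ : Z → Bool | ¬ χ y = true} ∪
          Prod.fst '' ((Prod.snd ⁻¹' B) ∩
            {p : (Z → Bool) × (Z → Bool) | p.2 y = true ∧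
              ∀ z, p.2 z = true → p.1 z = true})) := by
      ext χ
      simp only [mem_iInter, mem_setOf_eq, hbasis.isOpen_iff, mem_union, mem_image,
        mem_inter_iff, mem_preimage, Prod.exists]
      constructor
      · intro h y
        by_cases hy : χ y = true
        · obtain ⟨t, ⟨β, hβB, rfl⟩, hyt, hts⟩ := h y hy
          exact Or.inr ⟨χ, β, ⟨hβB, hyt, fun z hz => hts hz⟩, rfl⟩
        · exact Or.inl hy
      · intro h a ha
        rcases h a with h' | ⟨c, β, ⟨hβB, hβa, hβχ⟩, rfl⟩
        · exact absurd ha h'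
        · exact ⟨{x | β x = true}, ⟨β, hβB, rfl⟩, hβa, fun z hz => hβχ z hz⟩
    show AnalyticSet {χ : Z → Bool | IsOpen {x | χ x = true}}
    haveI : PolishSpace (Z → Bool) := {}
    rw [heq]
    apply AnalyticSet.iInter
    intro y
    apply AnalyticSet.union'
    · have : IsClosed {χ : Z → Bool | ¬ χ y = true} := by
        have : {χ : Z → Bool | ¬ χ y = true} = (fun χ : Z → Bool => χ y) ⁻¹' {b | ¬ b = true} := rfl
        rw [this]
        exact (isClosed_discrete _).preimage (continuous_apply y)
      exact this.analyticSet
    · apply AnalyticSet.image_of_continuous _ continuous_fst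
      apply AnalyticSet.inter'
      · exact hB.preimage continuous_snd
      · have c1 : Continuous (fun p : (Z → Bool) × (Z → Bool) => p.2 y) :=
          (continuous_apply y).comp continuous_snd
        have h1 : IsClosed {p : (Z → Bool) × (Z → Bool) | p.2 y = true} :=
          (isClosed_discrete ({b | b = true} : Set Bool)).preimage c1
        have h2 : IsClosed {p : (Z → Bool) × (Z → Bool) |
            ∀ z, p.2 z = true → p.1 z = true} := by
          have heq2 : {p : (Z → Bool) × (Z → Bool) | ∀ z, p.2 z = true → p.1 z = true} =
                ⋂ z : Z, ({p : (Z → Bool) × (Z → Bool) | ¬ p.2 z = true} ∪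
                  {p | p.1 z = true}) := by
              ext p
              simp only [mem_iInter, mem_setOf_eq, mem_union]
              constructor
              · intro h z; by_cases hz : p.2 z = true
                · exact Or.inr (h z hz)
                · exact Or.inl hz
              · intro h z hz; rcases h z with h' | h'
                · exact absurd hz h'
                · exact h'
          rw [heq2]
          apply isClosed_iInter
          intro z
          apply IsClosed.union
          · have c2 : Continuous (fun p : (Z → Bool) × (Z → Bool) => p.2 z) :=
              (continuous_apply z).comp continuous_snd
            exact (isClosed_discrete ({b | ¬ b = true} : Set Bool)).preimage c2
          · have c3 : Continuous (fun p : (Z → Bool) × (Z → Bool) => p.1 z) :=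
              (continuous_apply z).comp continuous_fst
            exact (isClosed_discrete ({b | b = true} : Set Bool)).preimage c3
        exact (h1.inter h2).analyticSet

/-- Proposition 2.2: for an inverse sequence of countable spaces with analytic
topologies, every countable subspace of the inverse limit has analytic topology;
moreover, if each `X n` has an F_σ base, so does every countable subspace of the
inverse limit. -/
theorem stmt17 (X : ℕ → Type*) [∀ n, TopologicalSpace (X n)]
    [∀ n, Countable (X n)]
    (hA : ∀ n, IsAnalyticTopology (X n))
    (f : ∀ n, X (n + 1) → X n) (hf : ∀ n, Continuous (f n)) :
    (∀ Y : Set {x : ∀ n, X n // ∀ n, x n = f n (x (n + 1))},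
        Y.Countable → IsAnalyticTopology ↥Y) ∧
    ((∀ n, HasFsigmaBase (X n)) →
      ∀ Y : Set {x : ∀ n, X n // ∀ n, x n = f n (x (n + 1))},
        Y.Countable → HasFsigmaBase ↥Y) := by
  classical
  constructor
  · -- analytic case
    intro Y hY
    haveI : Countable ↥Y := hY.to_subtype
    set F : ∀ n, (X n → Bool) → (↥Y → Bool) :=
      fun n χ y => χ (y.1.1 n) with hF
    have Fcont : ∀ n, Continuous (F n) := by
      intro n
      exact continuous_pi fun y => continuous_apply _
    set B : Set (↥Y → Bool) := ⋃ n, F n '' {χ : X n → Bool | IsOpen {x | χ x = true}} with hBdef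
    have hBan : AnalyticSet B :=
      AnalyticSet.iUnion fun n => (hA n).image_of_continuous (Fcont n)
    apply isAnalyticTopology_of_analytic_basis hBan
    have himg : (fun χ : ↥Y → Bool => {y | χ y = true}) '' B =
        {S : Set ↥Y | ∃ n, ∃ V ∈ {V : Set (X n) | IsOpen V},
          S = (fun y : ↥Y => y.1.1 n) ⁻¹' V} := by
      ext S
      constructor
      · rintro ⟨χ', ⟨_, ⟨n, rfl⟩, χ, hχ, rfl⟩, rfl⟩
        exact ⟨n, {x | χ x = true}, hχ, rfl⟩
      · rintro ⟨n, V, hV, rfl⟩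
        refine ⟨F n (fun x => decide (x ∈ V)),
          ⟨_, ⟨n, rfl⟩, fun x => decide (x ∈ V), ?_, rfl⟩, ?_⟩
        · show IsOpen {x | decide (x ∈ V) = true}
          simpa using hV
        · ext y; simp [hF]
    rw [himg]
    exact basis_of_invLimit f hf Y _ (fun n => isTopologicalBasis_opens)
  · -- F_σ case
    intro hFs Y hY
    set F : ∀ n, (X n → Bool) → (↥Y → Bool) :=
      fun n χ y => χ (y.1.1 n) with hF
    have Fcont : ∀ n, Continuous (F n) := by
      intro n
      exact continuous_pi fun y => continuous_apply _
    choose Bn hBnBasis Cn hCnClosed hBnEq using hFs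
    refine ⟨⋃ n, F n '' Bn n, ?_, ?_⟩
    · have himg : (fun χ : ↥Y → Bool => {y | χ y = true}) '' (⋃ n, F n '' Bn n) =
          {S : Set ↥Y | ∃ n, ∃ V ∈ (fun χ : X n → Bool => {x | χ x = true}) '' Bn n,
            S = (fun y : ↥Y => y.1.1 n) ⁻¹' V} := by
        ext S
        constructor
        · rintro ⟨χ', ⟨_, ⟨n, rfl⟩, χ, hχ, rfl⟩, rfl⟩
          exact ⟨n, {x | χ x = true}, ⟨χ, hχ, rfl⟩, rfl⟩
        · rintro ⟨n, V, ⟨χ, hχ, rfl⟩, rfl⟩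
          exact ⟨F n χ, ⟨_, ⟨n, rfl⟩, χ, hχ, rfl⟩, rfl⟩
      rw [himg]
      exact basis_of_invLimit f hf Y _ hBnBasis
    · set D : ℕ → ℕ → Set (↥Y → Bool) := fun n k => F n '' Cn n k with hD
      refine ⟨fun m => D (Nat.unpair m).1 (Nat.unpair m).2, ?_, ?_⟩
      · intro m
        have hcomp : IsCompact (Cn (Nat.unpair m).1 (Nat.unpair m).2) :=
          (hCnClosed _ _).isCompact
        exact (hcomp.image (Fcont _)).isClosed
      · have h1 : (⋃ n, F n '' Bn n) = ⋃ n, ⋃ k, D n k := by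
          apply iUnion_congr
          intro n
          rw [hBnEq n, image_iUnion]
        rw [h1, ← Set.iUnion_unpair D]
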